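/- Let n be an even positive integer and let k be an integer with 0 ≤ k < n/2. (i) If A ⊆ [n] satisfies |A| > n/2 + k and A is not an interval, then there exists an interval I ⊆ [n] with |I| ≥ n/2 + k such that A and I are not weakly separated. (ii) If B ⊆ [n] satisfies |B| < n/2 − k and B is not a co-interval, then there exists a co-interval J ⊆ [n] with |J| ≤ n/2 − k such that B and J are not weakly separated. -/
import Mathlib


open Finset

/-- The K-involution on subsets of `[n] = {1,…,n}`:
`A* = {i ∈ [n] : n+1−i ∉ A}`. -/
def KInv (n : ℕ) (A : Finset ℕ) : Finset ℕ :=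
  (Finset.Icc 1 n).filter (fun i => n + 1 - i ∉ A)

/-- `A` surrounds `B` (requires `B − A ≠ ∅`):
`min(A−B) < min(B−A)` and `max(A−B) > max(B−A)`,
with the conventions `min ∅ = ⊤` and `max ∅ = ⊥`. -/
def Surrounds (A B : Finset ℕ) : Prop :=
  (B \ A).Nonempty ∧ (A \ B).min < (B \ A).min ∧ (B \ A).max < (A \ B).max

/-- `A` and `B` are chord separated: there are no `i<j<k<l` with `i,k` in one
of `A−B`, `B−A` and `j,l` in the other. -/
def ChordSep (A B : Finset ℕ) : Prop :=
  ¬ ∃ i j k l : ℕ, i < j ∧ j < k ∧ k < l ∧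
    ((i ∈ A \ B ∧ k ∈ A \ B ∧ j ∈ B \ A ∧ l ∈ B \ A) ∨
     (i ∈ B \ A ∧ k ∈ B \ A ∧ j ∈ A \ B ∧ l ∈ A \ B))

/-- `A` and `B` are strongly separated: there are no `i<j<k` with `i,k` in one
of `A−B`, `B−A` and `j` in the other. -/
def StrongSep (A B : Finset ℕ) : Prop :=
  ¬ ∃ i j k : ℕ, i < j ∧ j < k ∧
    ((i ∈ A \ B ∧ k ∈ A \ B ∧ j ∈ B \ A) ∨
     (i ∈ B \ A ∧ k ∈ B \ A ∧ j ∈ A \ B))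

/-- `A` and `B` are weakly separated: chord separated, `|A| ≤ |B|` whenever
`A` surrounds `B`, and `|B| ≤ |A|` whenever `B` surrounds `A`. -/
def WeakSep (A B : Finset ℕ) : Prop :=
  ChordSep A B ∧ (Surrounds A B → A.card ≤ B.card) ∧
    (Surrounds B A → B.card ≤ A.card)

/-- `I` is an interval in `[n]`: a (possibly empty) set of consecutive
integers contained in `{1,…,n}`. -/
def IsIntervalIn (n : ℕ) (I : Finset ℕ) : Prop :=
  I ⊆ Finset.Icc 1 n ∧ ∀ x ∈ I, ∀ y ∈ I, ∀ z : ℕ, x ≤ z → z ≤ y → z ∈ I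

/-- `J` is a co-interval in `[n]`: the complement in `[n]` of an interval. -/
def IsCoIntervalIn (n : ℕ) (J : Finset ℕ) : Prop :=
  ∃ I : Finset ℕ, IsIntervalIn n I ∧ J = Finset.Icc 1 n \ I

-- helper lemmas
lemma KInv_subset (n : ℕ) (A : Finset ℕ) : KInv n A ⊆ Finset.Icc 1 n :=
  Finset.filter_subset _ _

lemma KInv_sdiff {n : ℕ} {A B : Finset ℕ} (hB : B ⊆ Finset.Icc 1 n) :
    KInv n A \ KInv n B = (B \ A).image (fun i => n + 1 - i) := by
  ext i
  simp only [KInv, Finset.mem_sdiff, Finset.mem_filter, Finset.mem_image, Finset.mem_Icc,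
    not_and, not_not]
  constructor
  · rintro ⟨⟨⟨h1, h2⟩, h3⟩, h4⟩
    exact ⟨n + 1 - i, ⟨h4 ⟨h1, h2⟩, h3⟩, by omega⟩
  · rintro ⟨j, ⟨hjB, hjA⟩, rfl⟩
    have hj := Finset.mem_Icc.mp (hB hjB)
    constructor
    · constructor
      · omega
      · intro hA; have : n + 1 - (n + 1 - j) = j := by omega
        rw [this] at hA; exact hjA hA
    · intro _; have : n + 1 - (n + 1 - j) = j := by omega
      rw [this]; exact hjB

lemma sdiff_KInv {n : ℕ} {A : Finset ℕ} (hA : A ⊆ Finset.Icc 1 n) :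
    Finset.Icc 1 n \ KInv n A = A.image (fun i => n + 1 - i) := by
  have h0 : KInv n (∅ : Finset ℕ) = Finset.Icc 1 n := by simp [KInv]
  have := KInv_sdiff (n := n) (A := (∅ : Finset ℕ)) (B := A) hA
  rw [h0, Finset.sdiff_empty] at this
  exact this

lemma card_KInv {n : ℕ} {A : Finset ℕ} (hA : A ⊆ Finset.Icc 1 n) :
    (KInv n A).card = n - A.card := by
  have h1 := sdiff_KInv hA
  have h2 : (Finset.Icc 1 n \ KInv n A).card = (Finset.Icc 1 n).card - (KInv n A).card :=
    Finset.card_sdiff_of_subset (KInv_subset n A)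
  have h3 : (A.image (fun i => n + 1 - i)).card = A.card := by
    apply Finset.card_image_of_injOn
    intro x hx y hy hxy
    have := Finset.mem_Icc.mp (hA hx); have := Finset.mem_Icc.mp (hA hy)
    simp only at hxy; omega
  have h4 : (KInv n A).card ≤ (Finset.Icc 1 n).card := Finset.card_le_card (KInv_subset n A)
  have h5 : A.card ≤ (Finset.Icc 1 n).card := Finset.card_le_card hA
  have h6 : (Finset.Icc 1 n \ KInv n A).card = A.card := by rw [h1, h3]
  rw [h6] at h2
  rw [Nat.card_Icc] at *
  omega

lemma KInv_KInv {n : ℕ} {A : Finset ℕ} (hA : A ⊆ Finset.Icc 1 n) :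
    KInv n (KInv n A) = A := by
  ext i
  simp only [KInv, Finset.mem_filter, Finset.mem_Icc, not_and, not_not]
  constructor
  · rintro ⟨h1, h2⟩
    have h3 : 1 ≤ n + 1 - i ∧ n + 1 - i ≤ n := by omega
    have := h2 h3
    have h5 : n + 1 - (n + 1 - i) = i := by omega
    rwa [h5] at this
  · intro hi
    have := Finset.mem_Icc.mp (hA hi)
    refine ⟨by omega, fun _ => ?_⟩
    have h5 : n + 1 - (n + 1 - i) = i := by omega
    rwa [h5]

lemma min'_image_rho {n : ℕ} {s : Finset ℕ} (hs : s.Nonempty) (h : s ⊆ Finset.Icc 1 n) :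
    (s.image (fun i => n + 1 - i)).min' (hs.image _) = n + 1 - s.max' hs := by
  apply le_antisymm
  · exact Finset.min'_le _ _ (Finset.mem_image_of_mem _ (s.max'_mem hs))
  · apply Finset.le_min'
    rintro y hy
    obtain ⟨t, ht, rfl⟩ := Finset.mem_image.mp hy
    have h1 := Finset.le_max' s t ht
    have h2 := Finset.mem_Icc.mp (h ht)
    have h3 := Finset.mem_Icc.mp (h (s.max'_mem hs))
    omega

lemma max'_image_rho {n : ℕ} {s : Finset ℕ} (hs : s.Nonempty) (h : s ⊆ Finset.Icc 1 n) :
    (s.image (fun i => n + 1 - i)).max' (hs.image _) = n + 1 - s.min' hs := by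
  apply le_antisymm
  · apply Finset.max'_le
    rintro y hy
    obtain ⟨t, ht, rfl⟩ := Finset.mem_image.mp hy
    have h1 := Finset.min'_le s t ht
    have h2 := Finset.mem_Icc.mp (h ht)
    have h3 := Finset.mem_Icc.mp (h (s.min'_mem hs))
    omega
  · exact Finset.le_max' _ _ (Finset.mem_image_of_mem _ (s.min'_mem hs))

lemma surrounds_KInv {n : ℕ} {A B : Finset ℕ} (hA : A ⊆ Finset.Icc 1 n)
    (hB : B ⊆ Finset.Icc 1 n) (h : Surrounds (KInv n A) (KInv n B)) : Surrounds B A := by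
  obtain ⟨h1, h2, h3⟩ := h
  rw [KInv_sdiff hA] at h1 h2 h3
  rw [KInv_sdiff hB] at h2 h3
  have hAB : (A \ B).Nonempty := Finset.image_nonempty.mp h1
  have hBA : (B \ A).Nonempty := by
    by_contra hc
    rw [Finset.not_nonempty_iff_eq_empty] at hc
    rw [hc] at h2
    simp only [Finset.image_empty, Finset.min_empty] at h2
    exact not_top_lt h2
  have hABs : A \ B ⊆ Finset.Icc 1 n := fun x hx => hA (Finset.mem_sdiff.mp hx).1
  have hBAs : B \ A ⊆ Finset.Icc 1 n := fun x hx => hB (Finset.mem_sdiff.mp hx).1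
  have e1 := Finset.coe_min' (hBA.image (fun i => n + 1 - i))
  have e2 := Finset.coe_min' (hAB.image (fun i => n + 1 - i))
  have e3 := Finset.coe_max' (hAB.image (fun i => n + 1 - i))
  have e4 := Finset.coe_max' (hBA.image (fun i => n + 1 - i))
  rw [← e1, ← e2] at h2
  rw [← e3, ← e4] at h3
  rw [min'_image_rho hBA hBAs, min'_image_rho hAB hABs] at h2
  rw [max'_image_rho hAB hABs, max'_image_rho hBA hBAs] at h3
  have h2' : n + 1 - (B \ A).max' hBA < n + 1 - (A \ B).max' hAB := WithTop.coe_lt_coe.mp h2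
  have h3' : n + 1 - (A \ B).min' hAB < n + 1 - (B \ A).min' hBA := WithBot.coe_lt_coe.mp h3
  have m1 := Finset.mem_Icc.mp (hBAs ((B \ A).max'_mem hBA))
  have m2 := Finset.mem_Icc.mp (hABs ((A \ B).max'_mem hAB))
  have m3 := Finset.mem_Icc.mp (hABs ((A \ B).min'_mem hAB))
  have m4 := Finset.mem_Icc.mp (hBAs ((B \ A).min'_mem hBA))
  refine ⟨hAB, ?_, ?_⟩
  · rw [← Finset.coe_min' hBA, ← Finset.coe_min' hAB]
    exact WithTop.coe_lt_coe.mpr (by omega)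
  · rw [← Finset.coe_max' hBA, ← Finset.coe_max' hAB]
    exact WithBot.coe_lt_coe.mpr (by omega)

lemma chordSep_KInv {n : ℕ} {A B : Finset ℕ} (hA : A ⊆ Finset.Icc 1 n)
    (hB : B ⊆ Finset.Icc 1 n) (h : ChordSep A B) : ChordSep (KInv n A) (KInv n B) := by
  rintro ⟨i, j, k, l, hij, hjk, hkl, hpat⟩
  rw [KInv_sdiff hB, KInv_sdiff hA] at hpat
  apply h
  rcases hpat with ⟨hi, hk, hj, hl⟩ | ⟨hi, hk, hj, hl⟩
  · obtain ⟨i', hi', rfl⟩ := Finset.mem_image.mp hi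
    obtain ⟨j', hj', rfl⟩ := Finset.mem_image.mp hj
    obtain ⟨k', hk', rfl⟩ := Finset.mem_image.mp hk
    obtain ⟨l', hl', rfl⟩ := Finset.mem_image.mp hl
    have bi := Finset.mem_Icc.mp (hB (Finset.mem_sdiff.mp hi').1)
    have bk := Finset.mem_Icc.mp (hB (Finset.mem_sdiff.mp hk').1)
    have bj := Finset.mem_Icc.mp (hA (Finset.mem_sdiff.mp hj').1)
    have bl := Finset.mem_Icc.mp (hA (Finset.mem_sdiff.mp hl').1)
    exact ⟨l', k', j', i', by omega, by omega, by omega,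
      Or.inl ⟨hl', hj', hk', hi'⟩⟩
  · obtain ⟨i', hi', rfl⟩ := Finset.mem_image.mp hi
    obtain ⟨j', hj', rfl⟩ := Finset.mem_image.mp hj
    obtain ⟨k', hk', rfl⟩ := Finset.mem_image.mp hk
    obtain ⟨l', hl', rfl⟩ := Finset.mem_image.mp hl
    have bi := Finset.mem_Icc.mp (hA (Finset.mem_sdiff.mp hi').1)
    have bk := Finset.mem_Icc.mp (hA (Finset.mem_sdiff.mp hk').1)
    have bj := Finset.mem_Icc.mp (hB (Finset.mem_sdiff.mp hj').1)
    have bl := Finset.mem_Icc.mp (hB (Finset.mem_sdiff.mp hl').1)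
    exact ⟨l', k', j', i', by omega, by omega, by omega,
      Or.inr ⟨hl', hj', hk', hi'⟩⟩

lemma weakSep_KInv {n : ℕ} {A B : Finset ℕ} (hA : A ⊆ Finset.Icc 1 n)
    (hB : B ⊆ Finset.Icc 1 n) (h : WeakSep A B) : WeakSep (KInv n A) (KInv n B) := by
  refine ⟨chordSep_KInv hA hB h.1, ?_, ?_⟩
  · intro hs
    have := h.2.2 (surrounds_KInv hA hB hs)
    rw [card_KInv hA, card_KInv hB]
    omega
  · intro hs
    have := h.2.1 (surrounds_KInv hB hA hs)
    rw [card_KInv hA, card_KInv hB]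
    omega

lemma KInv_interval {n : ℕ} {I : Finset ℕ} (hI : IsIntervalIn n I) :
    IsCoIntervalIn n (KInv n I) := by
  refine ⟨Finset.Icc 1 n \ KInv n I, ⟨Finset.sdiff_subset, ?_⟩, ?_⟩
  · intro x hx y hy z hxz hzy
    simp only [KInv, Finset.mem_sdiff, Finset.mem_filter, Finset.mem_Icc, not_and,
      not_not] at hx hy ⊢
    obtain ⟨hx1, hx2⟩ := hx
    obtain ⟨hy1, hy2⟩ := hy
    have hz1 : 1 ≤ z ∧ z ≤ n := by omega
    refine ⟨hz1, fun _ => ?_⟩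
    exact hI.2 _ (hy2 hy1) _ (hx2 hx1) (n + 1 - z) (by omega) (by omega)
  · rw [Finset.sdiff_sdiff_self_left]
    exact (Finset.inter_eq_right.mpr (KInv_subset n I)).symm

lemma interval_chordSep {n : ℕ} {A I : Finset ℕ} (hI : IsIntervalIn n I) : ChordSep A I := by
  rintro ⟨i, j, k, l, hij, hjk, hkl, hpat⟩
  rcases hpat with ⟨hi, hk, hj, hl⟩ | ⟨hi, hk, hj, hl⟩
  · have := hI.2 _ (Finset.mem_sdiff.mp hj).1 _ (Finset.mem_sdiff.mp hl).1 k hjk.le hkl.le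
    exact (Finset.mem_sdiff.mp hk).2 this
  · have := hI.2 _ (Finset.mem_sdiff.mp hi).1 _ (Finset.mem_sdiff.mp hk).1 j hij.le hjk.le
    exact (Finset.mem_sdiff.mp hj).2 this

lemma partI (n k : ℕ) (hn : 0 < n) (hev : Even n) (hk : k < n / 2) :
    ∀ A : Finset ℕ, A ⊆ Finset.Icc 1 n → n / 2 + k < A.card →
      ¬ IsIntervalIn n A →
      ∃ I : Finset ℕ, IsIntervalIn n I ∧ n / 2 + k ≤ I.card ∧ ¬ WeakSep A I := by
  intro A hA hcard hni
  have hd : n / 2 * 2 = n := Nat.div_mul_cancel hev.two_dvd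
  set m := n / 2 + k with hm
  have hm1 : 1 ≤ m := by omega
  have hne : A.Nonempty := Finset.card_pos.mp (by omega)
  have hext : ∃ x ∈ A, ∃ y ∈ A, ∃ z, x ≤ z ∧ z ≤ y ∧ z ∉ A := by
    by_contra hc
    push_neg at hc
    exact hni ⟨hA, fun x hx y hy z h1 h2 => hc x hx y hy z h1 h2⟩
  obtain ⟨x, hx, y, hy, z, hxz, hzy, hz⟩ := hext
  have hxz' : x < z := lt_of_le_of_ne hxz (fun h => hz (h ▸ hx))
  have hzy' : z < y := lt_of_le_of_ne hzy (fun h => hz (h.symm ▸ hy))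
  set a := A.min' hne with ha
  set b := A.max' hne with hb
  have hax : a ≤ x := Finset.min'_le _ _ hx
  have hyb : y ≤ b := Finset.le_max' _ _ hy
  have ha1 := Finset.mem_Icc.mp (hA (A.min'_mem hne))
  have hb1 := Finset.mem_Icc.mp (hA (A.max'_mem hne))
  have hsub : insert z A ⊆ Finset.Icc a b := by
    intro w hw
    rw [Finset.mem_insert] at hw
    rcases hw with rfl | hw
    · exact Finset.mem_Icc.mpr ⟨by omega, by omega⟩
    · exact Finset.mem_Icc.mpr ⟨Finset.min'_le _ _ hw, Finset.le_max' _ _ hw⟩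
  have hcard2 : A.card + 1 ≤ b + 1 - a := by
    have h1 := Finset.card_le_card hsub
    rwa [Finset.card_insert_of_notMem hz, Nat.card_Icc] at h1
  set s := min z (b - m) with hsdef
  have hsz : s ≤ z := min_le_left _ _
  have hsb : s ≤ b - m := min_le_right _ _
  have hscases : s = z ∨ s = b - m := by
    rcases le_total z (b - m) with h | h
    · exact Or.inl (min_eq_left h)
    · exact Or.inr (min_eq_right h)
  have f1 : a + 1 ≤ s := by omega
  have f2 : z ≤ s + m - 1 := by omega
  have f3 : s + m - 1 ≤ b - 1 := by omega
  have f4 : a < s := by omega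
  have f5 : s + m - 1 < b := by omega
  refine ⟨Finset.Icc s (s + m - 1), ?_, ?_, ?_⟩
  · constructor
    · intro w hw
      rw [Finset.mem_Icc] at hw ⊢
      omega
    · intro u hu v hv w h1 h2
      rw [Finset.mem_Icc] at hu hv ⊢
      omega
  · rw [Nat.card_Icc]; omega
  · rintro ⟨-, hsur, -⟩
    have hS : Surrounds A (Finset.Icc s (s + m - 1)) := by
      refine ⟨⟨z, Finset.mem_sdiff.mpr ⟨Finset.mem_Icc.mpr ⟨hsz, f2⟩, hz⟩⟩, ?_, ?_⟩
      · have haI : a ∈ A \ Finset.Icc s (s + m - 1) :=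
          Finset.mem_sdiff.mpr ⟨A.min'_mem hne, by rw [Finset.mem_Icc]; omega⟩
        calc (A \ Finset.Icc s (s + m - 1)).min ≤ (a : WithTop ℕ) := Finset.min_le haI
          _ < (s : WithTop ℕ) := WithTop.coe_lt_coe.mpr f4
          _ ≤ (Finset.Icc s (s + m - 1) \ A).min := Finset.le_min (fun w hw => by
              have := Finset.mem_Icc.mp (Finset.mem_sdiff.mp hw).1
              exact WithTop.coe_le_coe.mpr this.1)
      · have hbI : b ∈ A \ Finset.Icc s (s + m - 1) :=
          Finset.mem_sdiff.mpr ⟨A.max'_mem hne, by rw [Finset.mem_Icc]; omega⟩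
        calc (Finset.Icc s (s + m - 1) \ A).max ≤ ((s + m - 1 : ℕ) : WithBot ℕ) :=
              Finset.max_le (fun w hw => by
                have := Finset.mem_Icc.mp (Finset.mem_sdiff.mp hw).1
                exact WithBot.coe_le_coe.mpr this.2)
          _ < (b : WithBot ℕ) := WithBot.coe_lt_coe.mpr f5
          _ ≤ (A \ Finset.Icc s (s + m - 1)).max := Finset.le_max hbI
    have := hsur hS
    rw [Nat.card_Icc] at this
    omega


/-- For even `n` and `0 ≤ k < n/2`: (i) any `A ⊆ [n]` with `|A| > n/2 + k`
which is not an interval fails to be weakly separated from some interval `I`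
with `|I| ≥ n/2 + k`; (ii) any `B ⊆ [n]` with `|B| < n/2 − k` which is not a
co-interval fails to be weakly separated from some co-interval `J` with
`|J| ≤ n/2 − k`. -/
theorem not_weakSep_interval_coInterval
    (n k : ℕ) (hn : 0 < n) (hev : Even n) (hk : k < n / 2) :
    (∀ A : Finset ℕ, A ⊆ Finset.Icc 1 n → n / 2 + k < A.card →
      ¬ IsIntervalIn n A →
      ∃ I : Finset ℕ, IsIntervalIn n I ∧ n / 2 + k ≤ I.card ∧ ¬ WeakSep A I) ∧
    (∀ B : Finset ℕ, B ⊆ Finset.Icc 1 n → B.card < n / 2 - k →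
      ¬ IsCoIntervalIn n B →
      ∃ J : Finset ℕ, IsCoIntervalIn n J ∧ J.card ≤ n / 2 - k ∧ ¬ WeakSep B J) := by

  have hd : n / 2 * 2 = n := Nat.div_mul_cancel hev.two_dvd
  refine ⟨partI n k hn hev hk, ?_⟩
  intro B hB hcard hnc
  have hBcard : n / 2 + k < (KInv n B).card := by
    rw [card_KInv hB]; omega
  have hBint : ¬ IsIntervalIn n (KInv n B) := by
    intro hint
    have := KInv_interval hint
    rw [KInv_KInv hB] at this
    exact hnc this
  obtain ⟨I, hII, hIcard, hIw⟩ := partI n k hn hev hk (KInv n B) (KInv_subset n B) hBcard hBint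
  have hIsub := hII.1
  have hIle : I.card ≤ n := by
    have := Finset.card_le_card hIsub
    rwa [Nat.card_Icc, Nat.add_sub_cancel] at this
  refine ⟨KInv n I, KInv_interval hII, ?_, ?_⟩
  · rw [card_KInv hIsub]; omega
  · intro hw
    apply hIw
    have := weakSep_KInv hB (KInv_subset n I) hw
    rwa [KInv_KInv hIsub] at this
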